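/- For every finite simple graph G, the graph G^{1/3} obtained from G by replacing each edge by a path with three edges admits a homomorphism to the 5-cycle C_5 if and only if G admits a proper 5-colouring. -/

import Mathlib

/-- The 3-subdivision `G^{1/3}` of a simple graph `G`: each edge `[u,v]` is replaced by a
path with three edges `u — (u,v) — (v,u) — v`, the two internal vertices of the path
replacing the edge `[u,v]` being the two ordered pairs `(u,v)` and `(v,u)`. -/
def subdiv3 {V : Type} (G : SimpleGraph V) :
    SimpleGraph (V ⊕ {p : V × V // G.Adj p.1 p.2}) :=
  SimpleGraph.fromRel (fun x y =>
    match x, y with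
    | Sum.inl u, Sum.inr e => u = e.1.1
    | Sum.inr e, Sum.inr e' => e.1.1 = e'.1.2 ∧ e.1.2 = e'.1.1
    | _, _ => False)

/-- The cycle `C₅` on 5 vertices. -/
def cyc5 : SimpleGraph (ZMod 5) where
  Adj u v := v - u = 1 ∨ u - v = 1
  symm := ⟨fun u v h => h.symm⟩
  loopless := by
    constructor
    intro u h
    rcases h with h | h <;> rw [sub_self] at h <;> exact absurd h (by decide)

/-- Middle-vertex choice: given colours `a ≠ b`, `mid a b` is the vertex of `C₅`
adjacent to `a` on a chosen 3-path from `a` to `b`. -/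
def mid (a b : ZMod 5) : ZMod 5 :=
  a + (if b - a = 1 ∨ b - a = 3 then 1 else -1)

instance : DecidableRel cyc5.Adj := fun u v =>
  inferInstanceAs (Decidable (v - u = 1 ∨ u - v = 1))

lemma mid_adj_left : ∀ a b : ZMod 5, a ≠ b → cyc5.Adj a (mid a b) := by decide

lemma mid_adj_mid : ∀ a b : ZMod 5, a ≠ b → cyc5.Adj (mid a b) (mid b a) := by decide

lemma walk3_ne : ∀ a x y b : ZMod 5,
    cyc5.Adj a x → cyc5.Adj x y → cyc5.Adj y b → a ≠ b := by decide

/-- For every finite simple graph `G`, the 3-subdivision `G^{1/3}` admits a homomorphism to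
the 5-cycle `C₅` iff `G` is 5-colourable. -/
theorem subdiv3_hom_C5_iff_5colorable {V : Type} [Fintype V] (G : SimpleGraph V) :
    Nonempty (subdiv3 G →g cyc5) ↔ G.Colorable 5 := by
  constructor
  · rintro ⟨f⟩
    have hcard : Fintype.card (ZMod 5) = 5 := by decide
    rw [← hcard]
    refine (SimpleGraph.Coloring.mk (fun v => f (Sum.inl v)) ?_).colorable
    intro u v huv
    have hne : u ≠ v := huv.ne
    set e : {p : V × V // G.Adj p.1 p.2} := ⟨(u, v), huv⟩
    set e' : {p : V × V // G.Adj p.1 p.2} := ⟨(v, u), huv.symm⟩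
    have h1 : (subdiv3 G).Adj (Sum.inl u) (Sum.inr e) := by
      refine ⟨by simp, Or.inl rfl⟩
    have h2 : (subdiv3 G).Adj (Sum.inr e) (Sum.inr e') := by
      refine ⟨?_, Or.inl ⟨rfl, rfl⟩⟩
      simp only [e, e', Ne, Sum.inr.injEq, Subtype.mk.injEq, Prod.mk.injEq]
      rintro ⟨rfl, -⟩
      exact hne rfl
    have h3 : (subdiv3 G).Adj (Sum.inr e') (Sum.inl v) := by
      refine ⟨by simp, Or.inr rfl⟩
    exact walk3_ne _ _ _ _ (f.map_adj h1) (f.map_adj h2) (f.map_adj h3)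
  · rintro ⟨C⟩
    classical
    let c : V → ZMod 5 := fun v => ((C v : Fin 5) : ZMod 5)
    have hc : ∀ {u v : V}, G.Adj u v → c u ≠ c v := by
      intro u v h hEq
      apply C.valid h
      have : ((C u : Fin 5) : ZMod 5) = ((C v : Fin 5) : ZMod 5) := hEq
      exact_mod_cast this
    refine ⟨⟨fun x => match x with
      | Sum.inl v => c v
      | Sum.inr e => mid (c e.1.1) (c e.1.2), ?_⟩⟩
    rintro (u | e) (w | e') ⟨hne, hrel⟩ <;> dsimp only at hrel ⊢
    · rcases hrel with h | h <;> exact h.elim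
    · rcases hrel with h | h
      · cases h
        exact mid_adj_left _ _ (hc e'.2)
      · exact h.elim
    · rcases hrel with h | h
      · exact h.elim
      · cases h
        exact (mid_adj_left _ _ (hc e.2)).symm
    · rcases hrel with ⟨h1, h2⟩ | ⟨h1, h2⟩
      · have heq : mid (c e'.1.1) (c e'.1.2) = mid (c e.1.2) (c e.1.1) := by
          rw [h1, h2]
        rw [heq]
        exact (mid_adj_mid _ _ (hc e.2.symm)).symm
      · have heq : mid (c e.1.1) (c e.1.2) = mid (c e'.1.2) (c e'.1.1) := by
          rw [h1, h2]
        rw [heq]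
        exact mid_adj_mid _ _ (hc e'.2.symm)
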